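/- Let T be a k-linear, Hom-finite, Krull-Schmidt triangulated category with dim Hom(x,y) ≤ 1 for all indecomposables x,y, and Ext^1(x,x) = 0 for every indecomposable x, where Ext^1(x,y) := Hom(x, Σy). If a → ⊕_{i=1}^n e_i → b → Σa is a non-split distinguished triangle with a, b and all e_i indecomposable, then Ext^1(e_i, a) = 0 and Ext^1(b, e_i) = 0 for each i. -/

import Mathlib

open CategoryTheory CategoryTheory.Limits CategoryTheory.Pretriangulated

/-- In a vector space of dimension at most one, every vector is a scalar multiple
of any given nonzero vector. -/
lemma aux_smul_of_finrank_le_one {k : Type*} [Field k] {V : Type*} [AddCommGroup V]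
    [Module k V] [FiniteDimensional k V] (hd : Module.finrank k V ≤ 1)
    {h : V} (hh : h ≠ 0) (θ : V) : ∃ c : k, θ = c • h := by
  have h1 : Module.finrank k (Submodule.span k {h}) = 1 := finrank_span_singleton hh
  have h2 : Module.finrank k V = 1 := by
    have := Submodule.finrank_le (Submodule.span k {h})
    omega
  have h3 : Submodule.span k {h} = ⊤ :=
    Submodule.eq_top_of_finrank_eq (by rw [h1, h2])
  have : θ ∈ Submodule.span k ({h} : Set V) := h3 ▸ Submodule.mem_top
  obtain ⟨c, hc⟩ := Submodule.mem_span_singleton.mp this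
  exact ⟨c, hc.symm⟩

/-- Shifting preserves indecomposability. -/
lemma aux_indec_shift {C : Type*} [Category C] [Preadditive C] [HasZeroObject C]
    [HasShift C ℤ] [∀ n : ℤ, (shiftFunctor C n).Additive] [HasBinaryBiproducts C]
    (m : ℤ) {X : C} (hX : Indecomposable X) : Indecomposable (X⟦m⟧) := by
  haveI := preservesBinaryBiproducts_of_preservesBiproducts (shiftFunctor C (-m))
  constructor
  · intro h0
    exact hX.1 (((shiftEquiv C m).unitIso.app X).isZero_iff.mpr
      ((shiftFunctor C (-m)).map_isZero h0))
  · intro Y Z iso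
    have isoX : X ≅ Y⟦(-m)⟧ ⊞ Z⟦(-m)⟧ :=
      (shiftEquiv C m).unitIso.app X ≪≫ (shiftFunctor C (-m)).mapIso iso ≪≫
        (shiftFunctor C (-m)).mapBiprod Y Z
    rcases hX.2 _ _ isoX with h | h
    · exact Or.inl (((shiftEquiv C (-m)).unitIso.app Y).isZero_iff.mpr
        ((shiftFunctor C (-(-m))).map_isZero h))
    · exact Or.inr (((shiftEquiv C (-m)).unitIso.app Z).isZero_iff.mpr
        ((shiftFunctor C (-(-m))).map_isZero h))

/-- In a non-split distinguished triangle `a ⟶ ⊕ᵢ eᵢ ⟶ b ⟶ Σa` with `a`, `b` and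
all `eᵢ` indecomposable, in a `k`-linear Hom-finite Krull-Schmidt (i.e. idempotent
complete and Hom-finite) triangulated category with Hom-spaces between
indecomposables at most one-dimensional and no self-extensions of indecomposables,
one has `Ext¹(eᵢ, a) = 0` and `Ext¹(b, eᵢ) = 0`, where `Ext¹(x,y) = Hom(x, Σy)`. -/
theorem stmt_2 (k : Type*) [Field k] [IsAlgClosed k]
    {C : Type*} [Category C] [Preadditive C] [Linear k C] [HasZeroObject C]
    [HasShift C ℤ] [∀ n : ℤ, (shiftFunctor C n).Additive] [Pretriangulated C]
    [HasFiniteBiproducts C] [IsIdempotentComplete C]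
    (homFinite : ∀ X Y : C, FiniteDimensional k (X ⟶ Y))
    (homDim : ∀ X Y : C, Indecomposable X → Indecomposable Y →
      Module.finrank k (X ⟶ Y) ≤ 1)
    (extVanish : ∀ X : C, Indecomposable X → ∀ φ : X ⟶ X⟦(1 : ℤ)⟧, φ = 0)
    {a b : C} {n : ℕ} (e : Fin n → C)
    (f : a ⟶ ⨁ e) (g : (⨁ e) ⟶ b) (h : b ⟶ a⟦(1 : ℤ)⟧)
    (hT : Triangle.mk f g h ∈ distTriang C) (hns : h ≠ 0)
    (ha : Indecomposable a) (hb : Indecomposable b)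
    (he : ∀ i, Indecomposable (e i)) :
    ∀ i, (∀ φ : e i ⟶ a⟦(1 : ℤ)⟧, φ = 0) ∧ (∀ ψ : b ⟶ (e i)⟦(1 : ℤ)⟧, ψ = 0) := by
  haveI := homFinite b (a⟦(1 : ℤ)⟧)
  have hdim : Module.finrank k (b ⟶ a⟦(1 : ℤ)⟧) ≤ 1 :=
    homDim b (a⟦(1 : ℤ)⟧) hb (aux_indec_shift 1 ha)
  -- every map b ⟶ a⟦1⟧ is a multiple of h
  have hspan : ∀ θ : b ⟶ a⟦(1 : ℤ)⟧, ∃ c : k, θ = c • h :=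
    fun θ => aux_smul_of_finrank_le_one hdim hns θ
  intro i
  constructor
  · intro φ
    set ψ : (⨁ e) ⟶ a⟦(1 : ℤ)⟧ := biproduct.π e i ≫ φ with hψ
    have hfψ : f ≫ ψ = 0 := extVanish a ha _
    obtain ⟨θ, hθ⟩ := Triangle.yoneda_exact₂ _ hT ψ hfψ
    obtain ⟨c, rfl⟩ := hspan θ
    have hgh : g ≫ h = 0 := comp_distTriang_mor_zero₂₃ _ hT
    have hψ0 : ψ = 0 := by
      have hz : g ≫ (c • h) = 0 := by rw [Linear.comp_smul, hgh, smul_zero]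
      rw [hθ]
      exact hz
    calc φ = biproduct.ι e i ≫ ψ := by simp [hψ]
      _ = 0 := by rw [hψ0, Limits.comp_zero]
  · intro ψ₀
    set ψ : b ⟶ (⨁ e)⟦(1 : ℤ)⟧ := ψ₀ ≫ (biproduct.ι e i)⟦(1 : ℤ)⟧' with hψ
    have hrot := rot_of_distTriang _ hT
    have hcond : ψ ≫ (Triangle.mk g h (-f⟦(1 : ℤ)⟧')).mor₁⟦(1 : ℤ)⟧' = 0 := by
      have : ψ₀ ≫ (biproduct.ι e i ≫ g)⟦(1 : ℤ)⟧' = 0 := by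
        have hbb : ψ₀ ≫ (biproduct.ι e i ≫ g)⟦(1 : ℤ)⟧' = (0 : b ⟶ b⟦(1 : ℤ)⟧) :=
          extVanish b hb _
        exact hbb
      rw [Functor.map_comp] at this
      rw [hψ, Category.assoc]
      exact this
    obtain ⟨θ, hθ⟩ := Triangle.coyoneda_exact₁ _ hrot ψ hcond
    obtain ⟨c, rfl⟩ := hspan θ
    have hhf : h ≫ f⟦(1 : ℤ)⟧' = 0 := comp_distTriang_mor_zero₃₁ _ hT
    have hψ0 : ψ = 0 := by
      rw [hθ]
      dsimp [Triangle.mk]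
      have hz : (c • h) ≫ (-f⟦(1 : ℤ)⟧') = 0 := by
        rw [Linear.smul_comp, Preadditive.comp_neg, hhf, neg_zero, smul_zero]
      exact hz
    have : ψ₀ = ψ ≫ (biproduct.π e i)⟦(1 : ℤ)⟧' := by
      rw [hψ, Category.assoc, ← Functor.map_comp]
      simp
    rw [this, hψ0, Limits.zero_comp]
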